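/- Let 0 < a, 0 < b and a + b < 1, and set τ = 1 − a − b and ā = 1 − a, b̄ = 1 − b. Then (1/τ²)·∫_a^{b̄} ∫_a^{b̄} (min{u, v} − u·v) / (φ(Φ⁻¹(v))·φ(Φ⁻¹(u))) dv du = (1/τ²)·[ a·ā·(Φ⁻¹(a))² + b·b̄·(Φ⁻¹(b̄))² − 2·a·b·Φ⁻¹(a)·Φ⁻¹(b̄) − 2·τ·c₁·(a·Φ⁻¹(a) + b·Φ⁻¹(b̄)) − τ²·c₁² + τ·c₂ ]. -/

import Mathlib

open Real MeasureTheory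

/-- Standard normal density `φ(x) = (2π)^(−1/2) exp(−x²/2)`. -/
noncomputable def stdPDF (x : ℝ) : ℝ := (Real.sqrt (2 * Real.pi))⁻¹ * Real.exp (-x ^ 2 / 2)

/-- Standard normal cumulative distribution function `Φ(x) = ∫_{−∞}^x φ(u) du`. -/
noncomputable def stdCDF (x : ℝ) : ℝ := ∫ u in Set.Iic x, stdPDF u

/-- Mills hazard `h(γ) = φ(γ)/(1 − Φ(γ))`. -/
noncomputable def millsHazard (γ : ℝ) : ℝ := stdPDF γ / (1 - stdCDF γ)

/-- The standard normal quantile function `Φ⁻¹`, the inverse of `Φ`. -/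
noncomputable def stdQuantile : ℝ → ℝ := Function.invFun stdCDF

/-- Trimmed standard normal quantile moment
`c_k = (1/(1 − a − b)) ∫_a^{1−b} (Φ⁻¹(s))^k ds`. -/
noncomputable def trimMoment (a b : ℝ) (k : ℕ) : ℝ :=
  (1 - a - b)⁻¹ * ∫ s in a..(1 - b), (stdQuantile s) ^ k

open Set Filter intervalIntegral

lemma continuous_stdPDF : Continuous stdPDF := by
  unfold stdPDF; fun_prop

lemma stdPDF_pos (x : ℝ) : 0 < stdPDF x := by
  unfold stdPDF
  have : (0:ℝ) < Real.sqrt (2 * Real.pi) := Real.sqrt_pos.2 (by positivity)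
  positivity

lemma stdPDF_eq' : stdPDF = fun x => (Real.sqrt (2 * Real.pi))⁻¹ * Real.exp (-(1/2 : ℝ) * x ^ 2) := by
  funext x; unfold stdPDF; ring_nf

lemma integrable_stdPDF : Integrable stdPDF := by
  rw [stdPDF_eq']
  exact (integrable_exp_neg_mul_sq (by norm_num : (0:ℝ) < 1/2)).const_mul _

lemma integral_stdPDF : ∫ x, stdPDF x = 1 := by
  rw [stdPDF_eq']
  rw [MeasureTheory.integral_const_mul]
  rw [integral_gaussian]
  rw [show Real.pi / (1/2) = 2 * Real.pi by ring]
  rw [inv_mul_cancel₀ (by positivity : Real.sqrt (2*Real.pi) ≠ 0)]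

lemma stdPDF_neg (x : ℝ) : stdPDF (-x) = stdPDF x := by unfold stdPDF; ring_nf

lemma stdCDF_sub (x y : ℝ) : stdCDF y - stdCDF x = ∫ t in x..y, stdPDF t := by
  unfold stdCDF
  exact integral_Iic_sub_Iic integrable_stdPDF.integrableOn integrable_stdPDF.integrableOn

lemma hasDerivAt_stdCDF (x : ℝ) : HasDerivAt stdCDF (stdPDF x) x := by
  have h : ∀ y, stdCDF y = stdCDF 0 + ∫ t in (0:ℝ)..y, stdPDF t := by
    intro y; rw [← stdCDF_sub 0 y]; ring
  have : HasDerivAt (fun y => stdCDF 0 + ∫ t in (0:ℝ)..y, stdPDF t) (stdPDF x) x := by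
    refine HasDerivAt.const_add _ ?_
    refine integral_hasDerivAt_right (continuous_stdPDF.intervalIntegrable _ _)
      (continuous_stdPDF.stronglyMeasurableAtFilter _ _) continuous_stdPDF.continuousAt
  exact this.congr_of_eventuallyEq (Eventually.of_forall fun y => h y)

lemma continuous_stdCDF : Continuous stdCDF :=
  continuous_iff_continuousAt.2 fun x => (hasDerivAt_stdCDF x).continuousAt

lemma strictMono_stdCDF : StrictMono stdCDF := by
  intro x y hxy
  have h : 0 < ∫ t in x..y, stdPDF t :=
    intervalIntegral_pos_of_pos (continuous_stdPDF.intervalIntegrable _ _) stdPDF_pos hxy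
  have := stdCDF_sub x y
  linarith

lemma stdCDF_nonneg (x : ℝ) : 0 ≤ stdCDF x :=
  setIntegral_nonneg measurableSet_Iic fun t _ => (stdPDF_pos t).le

lemma stdCDF_le_one (x : ℝ) : stdCDF x ≤ 1 := by
  rw [← integral_stdPDF]
  exact setIntegral_le_integral integrable_stdPDF (Eventually.of_forall fun t => (stdPDF_pos t).le)

lemma stdCDF_mem_Ioo (x : ℝ) : stdCDF x ∈ Ioo (0:ℝ) 1 := by
  constructor
  · have := strictMono_stdCDF (show x - 1 < x by linarith)
    have := stdCDF_nonneg (x - 1); linarith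
  · have := strictMono_stdCDF (show x < x + 1 by linarith)
    have := stdCDF_le_one (x + 1); linarith

lemma tendsto_stdCDF_nat : Tendsto (fun n : ℕ => stdCDF n) atTop (nhds 1) := by
  have h := tendsto_setIntegral_of_monotone (μ := volume) (s := fun n : ℕ => Iic (n:ℝ)) (f := stdPDF)
    (fun n => measurableSet_Iic)
    (fun m n hmn => Iic_subset_Iic.2 (by exact_mod_cast hmn)) ?_
  · have hU : (⋃ n : ℕ, Iic (n:ℝ)) = univ := by
      ext x; simp only [mem_iUnion, mem_Iic, mem_univ, iff_true]
      exact exists_nat_ge x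
    rw [hU] at h
    simpa [stdCDF, setIntegral_univ, integral_stdPDF] using h
  · exact integrable_stdPDF.integrableOn

lemma exists_stdCDF_gt {p : ℝ} (hp : p < 1) : ∃ x : ℝ, p < stdCDF x := by
  have := (tendsto_order.1 tendsto_stdCDF_nat).1 p hp
  obtain ⟨n, hn⟩ := this.exists
  exact ⟨n, hn⟩

lemma stdCDF_neg_eq (x : ℝ) : stdCDF (-x) = 1 - stdCDF x := by
  have h1 : stdCDF (-x) = ∫ t in Ioi x, stdPDF t := by
    unfold stdCDF
    rw [← integral_comp_neg_Ioi]
    simp only [stdPDF_neg]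
  have h2 : stdCDF x + ∫ t in Ioi x, stdPDF t = 1 := by
    unfold stdCDF
    rw [integral_Iic_add_Ioi integrable_stdPDF.integrableOn integrable_stdPDF.integrableOn,
      integral_stdPDF]
  linarith

lemma exists_stdCDF_lt {p : ℝ} (hp : 0 < p) : ∃ x : ℝ, stdCDF x < p := by
  obtain ⟨x, hx⟩ := exists_stdCDF_gt (show 1 - p < 1 by linarith)
  exact ⟨-x, by rw [stdCDF_neg_eq]; linarith⟩

lemma stdCDF_surjOn : ∀ p ∈ Ioo (0:ℝ) 1, ∃ x, stdCDF x = p := by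
  rintro p ⟨hp0, hp1⟩
  obtain ⟨x₁, hx₁⟩ := exists_stdCDF_lt hp0
  obtain ⟨x₂, hx₂⟩ := exists_stdCDF_gt hp1
  have hle : x₁ ≤ x₂ := by
    by_contra h
    exact absurd (strictMono_stdCDF (not_le.mp h)) (by linarith [hx₁, hx₂])
  have := intermediate_value_Icc hle continuous_stdCDF.continuousOn
  obtain ⟨x, _, hx⟩ := this ⟨hx₁.le, hx₂.le⟩
  exact ⟨x, hx⟩

lemma stdCDF_stdQuantile {p : ℝ} (hp : p ∈ Ioo (0:ℝ) 1) : stdCDF (stdQuantile p) = p :=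
  Function.invFun_eq (stdCDF_surjOn p hp)

lemma stdQuantile_stdCDF (x : ℝ) : stdQuantile (stdCDF x) = x :=
  Function.leftInverse_invFun strictMono_stdCDF.injective x

lemma continuousOn_stdQuantile : ContinuousOn stdQuantile (Ioo (0:ℝ) 1) := by
  haveI : OrdConnected (Ioo (0:ℝ) 1) := ordConnected_Ioo
  set f : ℝ → Ioo (0:ℝ) 1 := fun x => ⟨stdCDF x, stdCDF_mem_Ioo x⟩ with hf
  have hmono : StrictMono f := fun x y h => Subtype.mk_lt_mk.2 (strictMono_stdCDF h)
  have hsurj : Function.Surjective f := by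
    rintro ⟨p, hp⟩
    obtain ⟨x, hx⟩ := stdCDF_surjOn p hp
    exact ⟨x, Subtype.ext hx⟩
  set e := StrictMono.orderIsoOfSurjective f hmono hsurj with he
  have hkey : ∀ p : Ioo (0:ℝ) 1, stdQuantile p = e.symm p := by
    intro p
    have h1 : f (e.symm p) = p := e.apply_symm_apply p
    have h2 : stdCDF (e.symm p) = p := congrArg Subtype.val h1
    rw [← h2, stdQuantile_stdCDF]
  rw [continuousOn_iff_continuous_restrict]
  have heq : (Ioo (0:ℝ) 1).restrict stdQuantile = ⇑e.symm := by
    funext p; exact hkey p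
  change Continuous ((Ioo (0:ℝ) 1).restrict stdQuantile)
  rw [heq]
  exact e.symm.continuous

lemma hasDerivAt_stdPDF (x : ℝ) : HasDerivAt stdPDF (-x * stdPDF x) x := by
  have h1 : HasDerivAt (fun x : ℝ => -x^2/2) (-x) x := by
    have := ((hasDerivAt_pow 2 x).neg).div_const 2
    exact this.congr_deriv (by norm_num; ring)
  have h2 : HasDerivAt (fun x : ℝ => Real.exp (-x^2/2)) (Real.exp (-x^2/2) * (-x)) x := h1.exp
  have h3 := h2.const_mul (Real.sqrt (2*Real.pi))⁻¹
  have : stdPDF = fun x : ℝ => (Real.sqrt (2*Real.pi))⁻¹ * Real.exp (-x^2/2) := rfl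
  rw [this]
  exact h3.congr_deriv (by ring)

lemma stdCDF_substitution {g : ℝ → ℝ} (c d : ℝ) (hg : ContinuousOn g (stdCDF '' uIcc c d)) :
    ∫ x in c..d, g (stdCDF x) * stdPDF x = ∫ u in stdCDF c..stdCDF d, g u :=
  integral_comp_mul_deriv' (fun x _ => hasDerivAt_stdCDF x) continuous_stdPDF.continuousOn hg

/-- The double-integral expression for the first variance-covariance constant `c₁*`. -/
theorem cStar_one_formula (a b : ℝ) (ha : 0 < a) (hb : 0 < b) (hab : a + b < 1) :
    (1 - a - b)⁻¹ ^ 2 *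
      ∫ u in a..(1 - b), ∫ v in a..(1 - b),
        (min u v - u * v) / (stdPDF (stdQuantile v) * stdPDF (stdQuantile u)) =
    (1 - a - b)⁻¹ ^ 2 *
      (a * (1 - a) * (stdQuantile a) ^ 2 + b * (1 - b) * (stdQuantile (1 - b)) ^ 2
        - 2 * a * b * stdQuantile a * stdQuantile (1 - b)
        - 2 * (1 - a - b) * trimMoment a b 1 *
            (a * stdQuantile a + b * stdQuantile (1 - b))
        - (1 - a - b) ^ 2 * (trimMoment a b 1) ^ 2
        + (1 - a - b) * trimMoment a b 2) := by
  have haI : a ∈ Ioo (0:ℝ) 1 := ⟨ha, by linarith⟩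
  have hBI : (1 - b) ∈ Ioo (0:ℝ) 1 := ⟨by linarith, by linarith⟩
  set α := stdQuantile a with hαdef
  set β := stdQuantile (1 - b) with hβdef
  have hΦα : stdCDF α = a := stdCDF_stdQuantile haI
  have hΦβ : stdCDF β = 1 - b := stdCDF_stdQuantile hBI
  have hαβ : α < β := by
    rcases lt_trichotomy α β with h | h | h
    · exact h
    · rw [h, hΦβ] at hΦα; linarith
    · have := strictMono_stdCDF h; rw [hΦα, hΦβ] at this; linarith
  have huIcc : uIcc α β = Icc α β := uIcc_of_le hαβ.le
  have himg : stdCDF '' uIcc α β ⊆ Ioo (0:ℝ) 1 := by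
    rintro _ ⟨x, -, rfl⟩; exact stdCDF_mem_Ioo x
  have hQφcont : ContinuousOn (fun v => stdPDF (stdQuantile v)) (Ioo (0:ℝ) 1) :=
    continuous_stdPDF.comp_continuousOn continuousOn_stdQuantile
  have hφne : ∀ x : ℝ, stdPDF x ≠ 0 := fun x => (stdPDF_pos x).ne'
  -- P and its derivative
  set P : ℝ → ℝ := fun x => ∫ y in α..x, stdCDF y with hPdef
  have hPderiv : ∀ x : ℝ, HasDerivAt P (stdCDF x) x := fun x =>
    integral_hasDerivAt_right (continuous_stdCDF.intervalIntegrable _ _)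
      (continuous_stdCDF.stronglyMeasurableAtFilter _ _) continuous_stdCDF.continuousAt
  have hPcont : Continuous P := continuous_iff_continuousAt.2 fun x => (hPderiv x).continuousAt
  set J : ℝ := ∫ y in α..β, stdCDF y with hJdef
  -- step 1 : inner substitution
  have claim1 : ∀ u : ℝ,
      (∫ v in a..(1-b), (min u v - u * v) / (stdPDF (stdQuantile v) * stdPDF (stdQuantile u)))
      = (∫ y in α..β, (min u (stdCDF y) - u * stdCDF y)) / stdPDF (stdQuantile u) := by
    intro u
    have hg : ContinuousOn
        (fun v => (min u v - u * v) / (stdPDF (stdQuantile v) * stdPDF (stdQuantile u)))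
        (Ioo (0:ℝ) 1) := by
      apply ContinuousOn.div
      · exact ((continuous_const.min continuous_id).sub
          (continuous_const.mul continuous_id)).continuousOn
      · exact hQφcont.mul continuousOn_const
      · intro v _; exact (mul_pos (stdPDF_pos _) (stdPDF_pos _)).ne'
    have h1 := stdCDF_substitution α β (hg.mono himg)
    rw [hΦα, hΦβ] at h1
    rw [← h1, ← intervalIntegral.integral_div]
    refine integral_congr fun x _ => ?_
    simp only [stdQuantile_stdCDF]
    have h₁ := hφne x
    have h₂ := hφne (stdQuantile u)
    field_simp
  -- step 2 : the identity for H ∘ stdCDF on [α, β]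
  have claim2 : ∀ x ∈ Icc α β,
      (∫ y in α..β, (min (stdCDF x) (stdCDF y) - stdCDF x * stdCDF y))
        = P x + (β - x) * stdCDF x - stdCDF x * J := by
    intro x hx
    have hmin_cont : Continuous fun y => min (stdCDF x) (stdCDF y) :=
      continuous_const.min continuous_stdCDF
    have hsub : (∫ y in α..β, (min (stdCDF x) (stdCDF y) - stdCDF x * stdCDF y))
        = (∫ y in α..β, min (stdCDF x) (stdCDF y)) - stdCDF x * J := by
      rw [integral_sub (g := fun y => stdCDF x * stdCDF y) (hmin_cont.intervalIntegrable _ _)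
        ((continuous_const.mul continuous_stdCDF).intervalIntegrable _ _),
        intervalIntegral.integral_const_mul]
    have hsplit : (∫ y in α..x, min (stdCDF x) (stdCDF y))
        + (∫ y in x..β, min (stdCDF x) (stdCDF y))
        = ∫ y in α..β, min (stdCDF x) (stdCDF y) :=
      integral_add_adjacent_intervals (hmin_cont.intervalIntegrable _ _)
        (hmin_cont.intervalIntegrable _ _)
    have h1 : (∫ y in α..x, min (stdCDF x) (stdCDF y)) = P x := by
      refine integral_congr fun y hy => ?_
      rw [uIcc_of_le hx.1] at hy
      exact min_eq_right (strictMono_stdCDF.monotone hy.2)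
    have h2 : (∫ y in x..β, min (stdCDF x) (stdCDF y)) = (β - x) * stdCDF x := by
      have : (∫ y in x..β, min (stdCDF x) (stdCDF y)) = ∫ _ in x..β, stdCDF x := by
        refine integral_congr fun y hy => ?_
        rw [uIcc_of_le hx.2] at hy
        exact min_eq_left (strictMono_stdCDF.monotone hy.1)
      rw [this, intervalIntegral.integral_const, smul_eq_mul]
    rw [hsub, ← hsplit, h1, h2]
  -- step 3 : outer substitution
  have claim3 : (∫ u in a..(1-b), ∫ v in a..(1-b),
        (min u v - u * v) / (stdPDF (stdQuantile v) * stdPDF (stdQuantile u)))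
      = ∫ x in α..β, (P x + (β - x) * stdCDF x - stdCDF x * J) := by
    have hg' : ContinuousOn
        (fun u => (P (stdQuantile u) + (β - stdQuantile u) * u - u * J) / stdPDF (stdQuantile u))
        (Ioo (0:ℝ) 1) := by
      apply ContinuousOn.div
      · exact (((hPcont.comp_continuousOn continuousOn_stdQuantile).add
          (((continuousOn_const.sub continuousOn_stdQuantile)).mul (continuousOn_id))).sub
          ((continuousOn_id).mul continuousOn_const))
      · exact hQφcont
      · intro v _; exact hφne _
    have hEq : EqOn
        (fun u => (∫ y in α..β, (min u (stdCDF y) - u * stdCDF y)) / stdPDF (stdQuantile u))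
        (fun u => (P (stdQuantile u) + (β - stdQuantile u) * u - u * J) / stdPDF (stdQuantile u))
        (stdCDF '' uIcc α β) := by
      rintro _ ⟨x, hx, rfl⟩
      rw [huIcc] at hx
      simp only [stdQuantile_stdCDF]
      rw [claim2 x hx]
    have hgcont : ContinuousOn
        (fun u => (∫ y in α..β, (min u (stdCDF y) - u * stdCDF y)) / stdPDF (stdQuantile u))
        (stdCDF '' uIcc α β) := (hg'.mono himg).congr hEq
    have h2 := stdCDF_substitution α β hgcont
    rw [hΦα, hΦβ] at h2
    calc (∫ u in a..(1-b), ∫ v in a..(1-b),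
        (min u v - u * v) / (stdPDF (stdQuantile v) * stdPDF (stdQuantile u)))
        = ∫ u in a..(1-b),
            (∫ y in α..β, (min u (stdCDF y) - u * stdCDF y)) / stdPDF (stdQuantile u) := by
          refine integral_congr fun u _ => claim1 u
      _ = ∫ x in α..β,
            ((∫ y in α..β, (min (stdCDF x) (stdCDF y) - stdCDF x * stdCDF y))
              / stdPDF (stdQuantile (stdCDF x))) * stdPDF x := h2.symm
      _ = ∫ x in α..β, (∫ y in α..β, (min (stdCDF x) (stdCDF y) - stdCDF x * stdCDF y)) := by
          refine integral_congr fun x _ => ?_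
          rw [stdQuantile_stdCDF, div_mul_cancel₀ _ (hφne x)]
      _ = ∫ x in α..β, (P x + (β - x) * stdCDF x - stdCDF x * J) := by
          refine integral_congr fun x hx => ?_
          rw [huIcc] at hx
          exact claim2 x hx
  -- step 4 : evaluate the integrals
  set M : ℝ := stdPDF α - stdPDF β with hMdef
  set S : ℝ := ∫ x in α..β, x^2 * stdPDF x with hSdef
  set I2 : ℝ := ∫ x in α..β, x * stdCDF x with hI2def
  have hM1 : (∫ x in α..β, x * stdPDF x) = M := by
    have hd : ∀ x ∈ uIcc α β, HasDerivAt (fun y => -stdPDF y) (x * stdPDF x) x := by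
      intro x _
      have := (hasDerivAt_stdPDF x).neg
      exact this.congr_deriv (by ring)
    rw [integral_eq_sub_of_hasDerivAt hd
      ((continuous_id.mul continuous_stdPDF).intervalIntegrable _ _)]
    rw [hMdef]
    all_goals ring
  have hJ : J = β * (1 - b) - α * a - M := by
    have h := integral_mul_deriv_eq_deriv_mul (a := α) (b := β)
      (u := stdCDF) (v := fun x => x) (u' := stdPDF) (v' := fun _ => (1:ℝ))
      (fun x _ => hasDerivAt_stdCDF x) (fun x _ => hasDerivAt_id x)
      (continuous_stdPDF.intervalIntegrable _ _) (continuous_const.intervalIntegrable _ _)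
    simp only [mul_one] at h
    have h2 : (∫ x in α..β, stdPDF x * x) = M := by
      rw [← hM1]; refine integral_congr fun x _ => by ring
    rw [h2] at h
    rw [hJdef, h, hΦα, hΦβ]; ring
  have hI2 : I2 = (β^2 * (1 - b) - α^2 * a) / 2 - S / 2 := by
    have hv : ∀ x ∈ uIcc α β, HasDerivAt (fun y : ℝ => y^2/2) x x := by
      intro x _
      have := (hasDerivAt_pow 2 x).div_const 2
      exact this.congr_deriv (by norm_num)
    have h := integral_mul_deriv_eq_deriv_mul (a := α) (b := β)
      (u := stdCDF) (v := fun y : ℝ => y^2/2) (u' := stdPDF) (v' := fun y => y)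
      (fun x _ => hasDerivAt_stdCDF x) hv
      (continuous_stdPDF.intervalIntegrable _ _) (continuous_id.intervalIntegrable _ _)
    have h2 : (∫ x in α..β, stdCDF x * x) = I2 := by
      rw [hI2def]; refine integral_congr fun x _ => by ring
    have h3 : (∫ x in α..β, stdPDF x * (x^2/2)) = S / 2 := by
      rw [hSdef, ← intervalIntegral.integral_div]
      refine integral_congr fun x _ => by ring
    rw [h2, h3, hΦα, hΦβ] at h
    rw [h]; ring
  have hI1 : (∫ x in α..β, P x) = β * J - I2 := by
    have h := integral_mul_deriv_eq_deriv_mul (a := α) (b := β)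
      (u := P) (v := fun x => x) (u' := stdCDF) (v' := fun _ => (1:ℝ))
      (fun x _ => hPderiv x) (fun x _ => hasDerivAt_id x)
      (continuous_stdCDF.intervalIntegrable _ _) (continuous_const.intervalIntegrable _ _)
    simp only [mul_one] at h
    have hPβ : P β = J := rfl
    have hPα : P α = 0 := integral_same
    have h2 : (∫ x in α..β, stdCDF x * x) = I2 := by
      rw [hI2def]; refine integral_congr fun x _ => by ring
    rw [hPβ, hPα, h2] at h
    rw [h]; ring
  have hG : (∫ x in α..β, (P x + (β - x) * stdCDF x - stdCDF x * J))
      = 2 * β * J - 2 * I2 - J^2 := by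
    have hint1 : IntervalIntegrable P volume α β := hPcont.intervalIntegrable _ _
    have hint2 : IntervalIntegrable (fun x => (β - x) * stdCDF x) volume α β :=
      ((continuous_const.sub continuous_id).mul continuous_stdCDF).intervalIntegrable _ _
    have hint3 : IntervalIntegrable (fun x => stdCDF x * J) volume α β :=
      (continuous_stdCDF.mul continuous_const).intervalIntegrable _ _
    rw [integral_sub (hint1.add hint2) hint3, integral_add hint1 hint2]
    have e2 : (∫ x in α..β, (β - x) * stdCDF x) = β * J - I2 := by
      have heq : (∫ x in α..β, (β - x) * stdCDF x)
          = ∫ x in α..β, (β * stdCDF x - x * stdCDF x) := by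
        refine integral_congr fun x _ => by ring
      have hia : IntervalIntegrable (fun x => β * stdCDF x) volume α β :=
        (continuous_const.mul continuous_stdCDF).intervalIntegrable _ _
      have hib : IntervalIntegrable (fun x => x * stdCDF x) volume α β :=
        (continuous_id.mul continuous_stdCDF).intervalIntegrable _ _
      rw [heq, integral_sub hia hib, intervalIntegral.integral_const_mul]
    have e3 : (∫ x in α..β, stdCDF x * J) = J * J := by
      rw [intervalIntegral.integral_mul_const]
    rw [hI1, e2, e3]; ring
  -- trimmed moments
  have hτ : (1 - a - b) ≠ 0 := by linarith
  have hQcont' : ContinuousOn stdQuantile (stdCDF '' uIcc α β) :=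
    continuousOn_stdQuantile.mono himg
  have htm1 : (1 - a - b) * trimMoment a b 1 = M := by
    have h := stdCDF_substitution α β hQcont'
    rw [hΦα, hΦβ] at h
    have h2 : (∫ x in α..β, stdQuantile (stdCDF x) * stdPDF x) = M := by
      rw [← hM1]; refine integral_congr fun x _ => by rw [stdQuantile_stdCDF]
    rw [h2] at h
    rw [trimMoment]
    simp only [pow_one]
    rw [← h]
    field_simp
  have htm2 : (1 - a - b) * trimMoment a b 2 = S := by
    have hQ2cont : ContinuousOn (fun s => (stdQuantile s)^2) (stdCDF '' uIcc α β) :=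
      (continuousOn_stdQuantile.pow 2).mono himg
    have h := stdCDF_substitution α β hQ2cont
    rw [hΦα, hΦβ] at h
    have h2 : (∫ x in α..β, (stdQuantile (stdCDF x))^2 * stdPDF x) = S := by
      rw [hSdef]; refine integral_congr fun x _ => by rw [stdQuantile_stdCDF]
    rw [h2] at h
    rw [trimMoment, ← h]
    field_simp
  -- finish
  rw [claim3, hG, hJ, hI2]
  congr 1
  linear_combination (2*(a*α + b*β) + M + (1-a-b)*trimMoment a b 1) * htm1 - htm2
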